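/- There exists a unique ξ > 0 such that ∑_{i=1}^N (w_i)^{ξ/(ξ+r)} = 1; moreover the function ξ ↦ ∑_{i=1}^N (w_i)^{ξ/(ξ+r)} is strictly decreasing on (0,∞). -/

import Mathlib

/-- There exists a unique `ξ > 0` with `∑ w_i^{ξ/(ξ+r)} = 1`, and
`ξ ↦ ∑ w_i^{ξ/(ξ+r)}` is strictly decreasing on `(0,∞)`. -/
theorem existsUnique_xi_and_strictAnti
    (N : ℕ) (hN : 2 ≤ N) (r : ℝ) (hr : 0 < r)
    (w : Fin N → ℝ) (hw : ∀ i, 0 < w i ∧ w i < 1) (hwsum : ∑ i, w i < 1) :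
    (∃! ξ : ℝ, 0 < ξ ∧ ∑ i, w i ^ (ξ / (ξ + r)) = 1) ∧
    StrictAntiOn (fun ξ : ℝ => ∑ i, w i ^ (ξ / (ξ + r))) (Set.Ioi 0) := by
  have hNE : Nonempty (Fin N) := ⟨⟨0, by omega⟩⟩
  set f : ℝ → ℝ := fun ξ => ∑ i, w i ^ (ξ / (ξ + r)) with hf
  -- strict antitonicity
  have hanti : StrictAntiOn f (Set.Ioi 0) := by
    intro x hx y hy hxy
    simp only [Set.mem_Ioi] at hx hy
    apply Finset.sum_lt_sum_of_nonempty Finset.univ_nonempty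
    intro i _
    apply Real.rpow_lt_rpow_of_exponent_gt (hw i).1 (hw i).2
    rw [div_lt_div_iff₀ (by linarith) (by linarith)]
    nlinarith
  -- f 0 = N
  have hf0 : f 0 = N := by
    simp [hf, Real.rpow_zero]
  -- continuity on nonneg reals
  have hcont : ∀ M : ℝ, ContinuousOn f (Set.Icc 0 M) := by
    intro M
    apply continuousOn_finset_sum
    intro i _
    have hg : ContinuousOn (fun ξ : ℝ => ξ / (ξ + r)) (Set.Icc 0 M) :=
      ContinuousOn.div continuousOn_id (by fun_prop)
        (fun x hx => by have := hx.1; positivity)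
    intro x hx
    have hc : ContinuousAt (fun t : ℝ => w i ^ t) (x / (x + r)) :=
      Real.continuousAt_const_rpow (ne_of_gt (hw i).1)
    have : ContinuousWithinAt ((fun t : ℝ => w i ^ t) ∘ (fun ξ : ℝ => ξ / (ξ + r)))
        (Set.Icc 0 M) x := hc.comp_continuousWithinAt_of_eq (hg x hx) rfl
    simpa [Function.comp_def] using this
  -- limit at infinity
  have hlim : Filter.Tendsto f Filter.atTop (nhds (∑ i, w i)) := by
    have hg : Filter.Tendsto (fun ξ : ℝ => ξ / (ξ + r)) Filter.atTop (nhds 1) := by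
      have h1 : Filter.Tendsto (fun ξ : ℝ => ξ + r) Filter.atTop Filter.atTop :=
        Filter.tendsto_atTop_add_const_right _ r Filter.tendsto_id
      have h2 : Filter.Tendsto (fun ξ : ℝ => r / (ξ + r)) Filter.atTop (nhds 0) := by
        simpa [div_eq_mul_inv] using Filter.Tendsto.const_mul r (h1.inv_tendsto_atTop)
      have h3 : Filter.Tendsto (fun ξ : ℝ => 1 - r / (ξ + r)) Filter.atTop (nhds 1) := by
        simpa using (tendsto_const_nhds.sub h2)
      apply h3.congr'
      filter_upwards [Filter.eventually_gt_atTop 0] with ξ hξ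
      field_simp
      ring
    apply tendsto_finset_sum
    intro i _
    have hc : ContinuousAt (fun t : ℝ => w i ^ t) 1 :=
      Real.continuousAt_const_rpow (ne_of_gt (hw i).1)
    simpa [Real.rpow_one, Function.comp_def] using hc.tendsto.comp hg
  -- find M with f M < 1
  obtain ⟨M, hM1, hMlt⟩ : ∃ M : ℝ, 1 ≤ M ∧ f M < 1 := by
    have := (hlim.eventually_lt_const hwsum).and (Filter.eventually_ge_atTop (1:ℝ))
    obtain ⟨M, h1, h2⟩ := this.exists
    exact ⟨M, h2, h1⟩
  -- existence via IVT
  have h1leN : (1:ℝ) ≤ N := by exact_mod_cast Nat.one_le_of_lt hN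
  have hIVT := intermediate_value_Icc' (by linarith : (0:ℝ) ≤ M) (hcont M)
  have h1mem : (1:ℝ) ∈ Set.Icc (f M) (f 0) := ⟨le_of_lt hMlt, by rw [hf0]; exact h1leN⟩
  obtain ⟨ξ, hξmem, hξeq⟩ := hIVT h1mem
  have hξpos : 0 < ξ := by
    rcases lt_or_eq_of_le hξmem.1 with h | h
    · exact h
    · exfalso; rw [← h] at hξeq; rw [hf0] at hξeq; norm_num at hξeq; omega
  refine ⟨⟨ξ, ⟨hξpos, hξeq⟩, ?_⟩, hanti⟩
  rintro y ⟨hy, hyeq'⟩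
  have hyeq : f y = 1 := hyeq'
  by_contra hne
  rcases lt_or_gt_of_ne hne with h | h
  · have := hanti (Set.mem_Ioi.mpr hy) (Set.mem_Ioi.mpr hξpos) h
    rw [hξeq, hyeq] at this; exact lt_irrefl 1 this
  · have := hanti (Set.mem_Ioi.mpr hξpos) (Set.mem_Ioi.mpr hy) h
    rw [hξeq, hyeq] at this; exact lt_irrefl 1 this
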